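/- Let S be a Cu-semigroup, let y be a full element of S, and let (y_n)_{n≥1} be a sequence of full elements of S with y_n ≤ y_{n+1} ≤ y for all n. Assume that F_y(S) ≠ ∅ and that lim_{n→∞} ρ(y, y_n) < ∞ (the sequence (ρ(y,y_n)) is decreasing, so this limit exists in [0,∞]; likewise (ρ(y_n,y)) is increasing and bounded above by 1 and (rc(S,y_n)) is decreasing, so their limits exist). Then (1/lim_{n→∞} ρ(y_n, y))·rc(S,y) ≤ lim_{n→∞} rc(S, y_n) ≤ (lim_{n→∞} ρ(y, y_n))·rc(S,y), with the convention γ·∞ = ∞ for γ ∈ (0,∞). -/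

import Mathlib

open scoped ENNReal

/-- `x' ≪ x`: for every increasing sequence whose supremum is `≥ x`,
some term of the sequence dominates `x'`. -/
def CuWayBelow {S : Type*} [Preorder S] (x' x : S) : Prop :=
  ∀ f : ℕ → S, Monotone f → ∀ s : S, IsLUB (Set.range f) s → x ≤ s → ∃ n, x' ≤ f n

/-- A `Cu`-semigroup: a partially ordered abelian monoid whose least element is `0`,
satisfying the axioms (O1)–(O4). -/
class CuSemigroup (S : Type*) extends AddCommMonoid S, PartialOrder S where
  add_le_add_left : ∀ a b : S, a ≤ b → ∀ c : S, c + a ≤ c + b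
  zero_le : ∀ x : S, 0 ≤ x
  O1 : ∀ f : ℕ → S, Monotone f → ∃ s : S, IsLUB (Set.range f) s
  O2 : ∀ x : S, ∃ f : ℕ → S, (∀ n, CuWayBelow (f n) (f (n + 1))) ∧ IsLUB (Set.range f) x
  O3 : ∀ {x' x y' y : S}, CuWayBelow x' x → CuWayBelow y' y → CuWayBelow (x' + y') (x + y)
  O4 : ∀ f g : ℕ → S, Monotone f → Monotone g → ∀ a b : S,
      IsLUB (Set.range f) a → IsLUB (Set.range g) b →
      IsLUB (Set.range fun n => f n + g n) (a + b)

/-- A functional on a `Cu`-semigroup: a map `S → [0,∞]` which is additive, order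
preserving, sends `0` to `0`, and preserves suprema of increasing sequences. -/
structure IsCuFunctional {S : Type*} [CuSemigroup S] (Λ : S → ℝ≥0∞) : Prop where
  map_zero : Λ 0 = 0
  map_add : ∀ x y : S, Λ (x + y) = Λ x + Λ y
  mono : Monotone Λ
  map_sup : ∀ f : ℕ → S, Monotone f → ∀ s : S, IsLUB (Set.range f) s → Λ s = ⨆ n, Λ (f n)

/-- `x` is full if `∞ · x = sup_n (n • x)` is the largest element of `S`. -/
def IsFull {S : Type*} [CuSemigroup S] (x : S) : Prop :=
  ∀ s : S, IsLUB (Set.range fun n : ℕ => n • x) s → ∀ y : S, y ≤ s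

/-- `F_w(S) ≠ ∅`: there exists a functional normalized at `w`. -/
def FNormNonempty {S : Type*} [CuSemigroup S] (w : S) : Prop :=
  ∃ Λ : S → ℝ≥0∞, IsCuFunctional Λ ∧ Λ w = 1

/-- The rank ratio `ρ(x, y)`: the infimum of all `r ∈ (0,∞)` with
`λ(x) ≤ r·λ(y)` for every functional `λ`; `∞` if there is no such `r`. -/
noncomputable def rankRatio {S : Type*} [CuSemigroup S] (x y : S) : ℝ≥0∞ :=
  sInf {r : ℝ≥0∞ | 0 < r ∧ r ≠ ⊤ ∧ ∀ Λ : S → ℝ≥0∞, IsCuFunctional Λ → Λ x ≤ r * Λ y}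

/-- `S` has `r`-comparison relative to `w`. -/
def HasRComparison {S : Type*} [CuSemigroup S] (r : ℝ≥0∞) (w : S) : Prop :=
  ∀ x y : S, (∀ Λ : S → ℝ≥0∞, IsCuFunctional Λ → Λ x + r * Λ w ≤ Λ y) → x ≤ y

/-- The radius of comparison of `S` relative to `w`: the infimum of all `r ∈ (0,∞)`
for which `S` has `r`-comparison relative to `w`; `∞` if there is no such `r`. -/
noncomputable def rc {S : Type*} [CuSemigroup S] (w : S) : ℝ≥0∞ :=
  sInf {r : ℝ≥0∞ | 0 < r ∧ r ≠ ⊤ ∧ HasRComparison r w}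

section Aux

variable {S : Type*} [CuSemigroup S]

lemma IsCuFunctional.map_nsmul {Λ : S → ℝ≥0∞} (hΛ : IsCuFunctional Λ) (x : S) :
    ∀ n : ℕ, Λ (n • x) = n * Λ x := by
  intro n
  induction n with
  | zero => simp [hΛ.map_zero]
  | succ k ih =>
      rw [succ_nsmul, hΛ.map_add, ih]
      push_cast
      ring

lemma IsFull.functional_pos {x : S} (hx : IsFull x) {Λ : S → ℝ≥0∞}
    (hΛ : IsCuFunctional Λ) {z : S} (hz : Λ z ≠ 0) : Λ x ≠ 0 := by
  intro h0
  have hmonot : Monotone (fun n : ℕ => n • x) := by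
    apply monotone_nat_of_le_succ
    intro n
    rw [succ_nsmul]
    simpa using CuSemigroup.add_le_add_left 0 x (CuSemigroup.zero_le x) (n • x)
  obtain ⟨s, hs⟩ := CuSemigroup.O1 _ hmonot
  have hzs : z ≤ s := hx s hs z
  have : Λ s = 0 := by
    rw [hΛ.map_sup _ hmonot s hs]
    simp only [hΛ.map_nsmul, h0, mul_zero, iSup_const]
  exact hz (le_antisymm (this ▸ hΛ.mono hzs) (zero_le))

/-- Transfer lemma: if `Λ a ≤ s * Λ b` for all functionals, then `rc b ≤ s * rc a`. -/
lemma rc_le_mul_rc (a b : S) {s : ℝ≥0∞} (hs0 : 0 < s) (hsT : s ≠ ⊤)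
    (hsab : ∀ Λ : S → ℝ≥0∞, IsCuFunctional Λ → Λ a ≤ s * Λ b) :
    rc b ≤ s * rc a := by
  have key : s⁻¹ * rc b ≤ rc a := by
    apply le_sInf
    rintro r ⟨hr0, hrT, hrc⟩
    have hmem : rc b ≤ s * r := by
      apply sInf_le
      refine ⟨ENNReal.mul_pos hs0.ne' hr0.ne', ENNReal.mul_ne_top hsT hrT, ?_⟩
      intro x z hxz
      apply hrc x z
      intro Λ hΛ
      refine le_trans ?_ (hxz Λ hΛ)
      have hra : r * Λ a ≤ s * r * Λ b := by
        calc r * Λ a ≤ r * (s * Λ b) := by gcongr; exact hsab Λ hΛ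
          _ = s * r * Λ b := by ring
      exact add_le_add_right hra (Λ x)
    calc s⁻¹ * rc b ≤ s⁻¹ * (s * r) := by gcongr
      _ = r := by rw [← mul_assoc, ENNReal.inv_mul_cancel hs0.ne' hsT, one_mul]
  calc rc b = s * (s⁻¹ * rc b) := by
        rw [← mul_assoc, ENNReal.mul_inv_cancel hs0.ne' hsT, one_mul]
    _ ≤ s * rc a := by gcongr

/-- The defining set of the rank ratio. -/
def rrSet (a b : S) : Set ℝ≥0∞ :=
  {r : ℝ≥0∞ | 0 < r ∧ r ≠ ⊤ ∧ ∀ Λ : S → ℝ≥0∞, IsCuFunctional Λ → Λ a ≤ r * Λ b}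

lemma rankRatio_eq (a b : S) : rankRatio a b = sInf (rrSet a b) := rfl

lemma rc_le_rankRatio_mul_rc (a b : S) (hne : (rrSet a b).Nonempty)
    (hcase : rc a ≠ ⊤ ∨ rankRatio a b ≠ 0) :
    rc b ≤ rankRatio a b * rc a := by
  by_cases hT : rc a = ⊤
  · have hρ : rankRatio a b ≠ 0 := hcase.resolve_left (by simp [hT])
    rw [hT, ENNReal.mul_top hρ]
    exact le_top
  · have : Nonempty (rrSet a b) := hne.to_subtype
    have hdist : rankRatio a b * rc a = ⨅ s : rrSet a b, (s : ℝ≥0∞) * rc a := by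
      rw [rankRatio_eq, sInf_eq_iInf']
      exact ENNReal.iInf_mul (fun h => absurd h hT)
    rw [hdist]
    apply le_iInf
    rintro ⟨s, hs0, hsT, hsab⟩
    exact rc_le_mul_rc a b hs0 hsT hsab

end Aux
/-- Theorem (MainThmForRCLim): for an increasing sequence `(y n)` of full elements
below a full element `y` with `F_y(S) ≠ ∅` and `lim_n ρ(y, y n) < ∞`
(the limits being `⨅`/`⨆` of the respective monotone sequences),
`(1/lim_n ρ(y n, y)) · rc(S,y) ≤ lim_n rc(S, y n) ≤ (lim_n ρ(y, y n)) · rc(S,y)`. -/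
theorem stmt1 {S : Type*} [CuSemigroup S] (y : S) (ys : ℕ → S)
    (hy : IsFull y) (hys : ∀ n, IsFull (ys n))
    (hmono : ∀ n, ys n ≤ ys (n + 1)) (hle : ∀ n, ys n ≤ y)
    (hFy : FNormNonempty y)
    (hlim : (⨅ n, rankRatio y (ys n)) ≠ ⊤) :
    (⨆ n, rankRatio (ys n) y)⁻¹ * rc y ≤ (⨅ n, rc (ys n)) ∧
      (⨅ n, rc (ys n)) ≤ (⨅ n, rankRatio y (ys n)) * rc y := by
  obtain ⟨Λ₀, hΛ₀, hΛ₀y⟩ := hFy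
  -- `1` belongs to each set `rrSet (ys n) y`
  have h1mem : ∀ n, (1 : ℝ≥0∞) ∈ rrSet (ys n) y := by
    intro n
    exact ⟨one_pos, ENNReal.one_ne_top, fun Λ hΛ => by rw [one_mul]; exact hΛ.mono (hle n)⟩
  have hσ_le_one : ∀ n, rankRatio (ys n) y ≤ 1 := fun n => sInf_le (h1mem n)
  have hΛ₀ys : ∀ n, Λ₀ (ys n) ≠ 0 := by
    intro n
    exact (hys n).functional_pos hΛ₀ (z := y) (by rw [hΛ₀y]; exact one_ne_zero)
  have hσ_pos : ∀ n, rankRatio (ys n) y ≠ 0 := by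
    intro n
    have : Λ₀ (ys n) ≤ rankRatio (ys n) y := by
      apply le_sInf
      rintro r ⟨hr0, hrT, hr⟩
      calc Λ₀ (ys n) ≤ r * Λ₀ y := hr Λ₀ hΛ₀
        _ = r := by rw [hΛ₀y, mul_one]
    exact fun h => hΛ₀ys n (le_antisymm (h ▸ this) (zero_le))
  have hρ_ge_one : ∀ n, (1 : ℝ≥0∞) ≤ rankRatio y (ys n) := by
    intro n
    apply le_sInf
    rintro r ⟨hr0, hrT, hr⟩
    calc (1 : ℝ≥0∞) = Λ₀ y := hΛ₀y.symm
      _ ≤ r * Λ₀ (ys n) := hr Λ₀ hΛ₀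
      _ ≤ r * Λ₀ y := by gcongr; exact hΛ₀.mono (hle n)
      _ = r := by rw [hΛ₀y, mul_one]
  set b := ⨆ n, rankRatio (ys n) y with hb
  have hbT : b ≠ ⊤ := ne_top_of_le_ne_top ENNReal.one_ne_top (iSup_le hσ_le_one)
  have hb0 : b ≠ 0 := by
    intro h
    apply hσ_pos 0
    have h0 := le_iSup (fun n => rankRatio (ys n) y) 0
    rw [← hb, h] at h0
    exact le_antisymm h0 (zero_le)
  constructor
  · -- first inequality
    have key : rc y ≤ b * ⨅ n, rc (ys n) := by
      rw [ENNReal.mul_iInf_of_ne hb0 hbT]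
      apply le_iInf
      intro n
      calc rc y ≤ rankRatio (ys n) y * rc (ys n) :=
            rc_le_rankRatio_mul_rc (ys n) y ⟨1, h1mem n⟩ (Or.inr (hσ_pos n))
        _ ≤ b * rc (ys n) := by gcongr; exact hb ▸ le_iSup (fun n => rankRatio (ys n) y) n
    calc b⁻¹ * rc y ≤ b⁻¹ * (b * ⨅ n, rc (ys n)) := by gcongr
      _ = ⨅ n, rc (ys n) := by
          rw [← mul_assoc, ENNReal.inv_mul_cancel hb0 hbT, one_mul]
  · -- second inequality
    by_cases hrcT : rc y = ⊤
    · have hc0 : (⨅ n, rankRatio y (ys n)) ≠ 0 :=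
        fun h => by simpa [h] using le_iInf hρ_ge_one
      rw [hrcT, ENNReal.mul_top hc0]
      exact le_top
    · rw [ENNReal.iInf_mul (fun h => absurd h hrcT)]
      apply le_iInf
      intro n
      by_cases hn : (rrSet y (ys n)).Nonempty
      · exact le_trans (iInf_le _ n) (rc_le_rankRatio_mul_rc y (ys n) hn (Or.inl hrcT))
      · rw [Set.not_nonempty_iff_eq_empty] at hn
        have hnT : rankRatio y (ys n) = ⊤ := by rw [rankRatio_eq, hn, sInf_empty]
        by_cases hz : rc y = 0
        · -- there is some m with finite rank ratio
          have : ∃ m, rankRatio y (ys m) ≠ ⊤ := by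
            by_contra h
            push_neg at h
            exact hlim (by simp [h])
          obtain ⟨m, hm⟩ := this
          have hmne : (rrSet y (ys m)).Nonempty := by
            by_contra h
            rw [Set.not_nonempty_iff_eq_empty] at h
            exact hm (by rw [rankRatio_eq, h, sInf_empty])
          have : rc (ys m) ≤ 0 := by
            have := rc_le_rankRatio_mul_rc y (ys m) hmne (Or.inl hrcT)
            rwa [hz, mul_zero] at this
          calc (⨅ k, rc (ys k)) ≤ rc (ys m) := iInf_le _ m
            _ ≤ 0 := this
            _ ≤ rankRatio y (ys n) * rc y := zero_le
        · rw [hnT, ENNReal.top_mul hz]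
          exact le_top
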